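/- Fix integers D ≥ 1 and r ≥ 3, and let C = 𝔸_D⁻¹𝔸_D*⁻¹𝔸_D𝔸_D*. Then the product Π_{s=−D}^{D} (C − (1−r)^s·I) over all integers s with −D ≤ s ≤ D equals the zero matrix. Since the 2D+1 scalars (1−r)^s (−D ≤ s ≤ D) are pairwise distinct, C is diagonalizable and every eigenvalue of C is of the form (1−r)^s for some integer s with −D ≤ s ≤ D. -/

import Mathlib

/-- The `D`-th distance matrix `𝔸_D` of the Hamming graph `H(D,r)`:
the `(u,v)`-entry is `1` if `u` and `v` differ in all `D` coordinates, `0` otherwise. -/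
noncomputable def hammingAD (D r : ℕ) : Matrix (Fin D → Fin r) (Fin D → Fin r) ℂ :=
  Matrix.of fun u v => if ∀ k, u k ≠ v k then 1 else 0

/-- The Hamming weight of a vertex of `H(D,r)`: the number of nonzero coordinates. -/
def hammingWt {D r : ℕ} [NeZero r] (y : Fin D → Fin r) : ℕ :=
  (Finset.univ.filter fun k => y k ≠ 0).card

/-- The `D`-th dual distance matrix `𝔸_D*` of `H(D,r)` with respect to the base vertex
`(0,…,0)`: the diagonal matrix with `(y,y)`-entry `(−1)^{w(y)} (r−1)^{D−w(y)}`. -/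
noncomputable def hammingADstar (D r : ℕ) [NeZero r] :
    Matrix (Fin D → Fin r) (Fin D → Fin r) ℂ :=
  Matrix.diagonal fun y => (-1) ^ hammingWt y * ((r : ℂ) - 1) ^ (D - hammingWt y)

/-- The group commutator `C = 𝔸_D⁻¹ 𝔸_D*⁻¹ 𝔸_D 𝔸_D*`. -/
noncomputable def hammingC (D r : ℕ) [NeZero r] :
    Matrix (Fin D → Fin r) (Fin D → Fin r) ℂ :=
  (hammingAD D r)⁻¹ * (hammingADstar D r)⁻¹ * hammingAD D r * hammingADstar D r

/-! ### Auxiliary development -/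

open Matrix

set_option linter.unusedSectionVars false
set_option maxHeartbeats 1000000

noncomputable section HAux

variable (r : ℕ) [NeZero r]

/-- `t = r - 1` as a complex number. -/
def tt (r : ℕ) : ℂ := (r : ℂ) - 1

def oV : Fin r → ℂ := fun _ => 1
def d0V : Fin r → ℂ := fun k => if k = 0 then 1 else 0
def d1V : Fin r → ℂ := fun k => if k = 1 then 1 else 0

lemma vmv_mul (a b c d : Fin r → ℂ) :
    vecMulVec a b * vecMulVec c d = (b ⬝ᵥ c) • vecMulVec a d := by
  ext i j
  simp only [mul_apply, vecMulVec_apply, Matrix.smul_apply, dotProduct, Finset.sum_mul, smul_eq_mul]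
  exact Finset.sum_congr rfl fun k _ => by ring

lemma dot_oo : oV r ⬝ᵥ oV r = tt r + 1 := by
  simp [oV, dotProduct, tt, Finset.card_univ]
lemma dot_od0 : oV r ⬝ᵥ d0V r = 1 := by simp [oV, d0V, dotProduct]
lemma dot_d0o : d0V r ⬝ᵥ oV r = 1 := by simp [oV, d0V, dotProduct]
lemma dot_od1 : oV r ⬝ᵥ d1V r = 1 := by simp [oV, d1V, dotProduct]
lemma dot_d1o : d1V r ⬝ᵥ oV r = 1 := by simp [oV, d1V, dotProduct]
lemma dot_d0d0 : d0V r ⬝ᵥ d0V r = 1 := by simp [d0V, dotProduct]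
lemma dot_d1d1 : d1V r ⬝ᵥ d1V r = 1 := by simp [d1V, dotProduct]
lemma dot_d0d1 (hr : 3 ≤ r) : d0V r ⬝ᵥ d1V r = 0 := by
  simp [d0V, d1V, dotProduct]; omega
lemma dot_d1d0 (hr : 3 ≤ r) : d1V r ⬝ᵥ d0V r = 0 := by
  simp [d0V, d1V, dotProduct]; omega

def Ar : Matrix (Fin r) (Fin r) ℂ := Matrix.of fun i j => if i ≠ j then 1 else 0
def A2 : Matrix (Fin r) (Fin r) ℂ := vecMulVec (oV r) (oV r) - tt r • 1
def Br : Matrix (Fin r) (Fin r) ℂ := Matrix.diagonal fun i => if i = 0 then tt r else -1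
def B2 : Matrix (Fin r) (Fin r) ℂ := (tt r + 1) • vecMulVec (d0V r) (d0V r) - tt r • 1
def Pm : Matrix (Fin r) (Fin r) ℂ :=
  vecMulVec (oV r) (d0V r) + vecMulVec (d0V r) (d0V r) + vecMulVec (d0V r) (d1V r)
    + vecMulVec (d1V r) (oV r) - vecMulVec (d1V r) (d0V r) - 1
def Q2 : Matrix (Fin r) (Fin r) ℂ :=
  vecMulVec (oV r) (oV r) - vecMulVec (oV r) (d0V r) + tt r • vecMulVec (d0V r) (d0V r)
    + (tt r + 2) • vecMulVec (d1V r) (d0V r) + tt r • vecMulVec (d1V r) (d1V r)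
    - (2 : ℂ) • vecMulVec (d1V r) (oV r) - tt r • 1
def lamF : Fin r → ℂ := fun j => if j = 0 then -(tt r)⁻¹ else if j = 1 then -(tt r) else 1
def lam2F : Fin r → ℂ := fun j => if j = 0 then -1 else if j = 1 then -(tt r * tt r) else tt r
def L2 : Matrix (Fin r) (Fin r) ℂ := Matrix.diagonal (lam2F r)
def eF : Fin r → ℤ := fun j => if j = 0 then -1 else if j = 1 then 1 else 0

lemma Ar_eq : Ar r = vecMulVec (oV r) (oV r) - 1 := by
  ext i j
  by_cases h : i = j <;> simp [Ar, oV, vecMulVec_apply, one_apply, h]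

lemma Br_eq : Br r = (tt r + 1) • vecMulVec (d0V r) (d0V r) - 1 := by
  ext i j
  by_cases h : i = j
  · subst h
    by_cases h0 : i = 0 <;> simp [Br, d0V, vecMulVec_apply, one_apply, h0] <;> ring
  · by_cases h0 : i = 0 <;> by_cases h1 : j = 0 <;>
      simp_all [Br, d0V, vecMulVec_apply, one_apply, diagonal_apply_ne]

lemma L2_eq (hr : 3 ≤ r) :
    L2 r = tt r • 1 - (tt r + 1) • vecMulVec (d0V r) (d0V r)
      - (tt r * tt r + tt r) • vecMulVec (d1V r) (d1V r) := by
  have hr1 : r ≠ 1 := by omega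
  ext i j
  by_cases h : i = j
  · subst h
    by_cases h0 : i = 0
    · subst h0; simp [L2, lam2F, d0V, d1V, vecMulVec_apply, one_apply, hr1] <;> ring
    · by_cases h1 : i = 1
      · subst h1; simp [L2, lam2F, d0V, d1V, vecMulVec_apply, one_apply, hr1, h0] <;> ring
      · simp [L2, lam2F, d0V, d1V, vecMulVec_apply, one_apply, h0, h1]
  · by_cases h0 : i = 0 <;> by_cases h1 : j = 0 <;> by_cases h2 : i = 1 <;> by_cases h3 : j = 1 <;>
      simp_all [L2, lam2F, d0V, d1V, vecMulVec_apply, one_apply, diagonal_apply_ne, hr1]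

lemma hAA2 : Ar r * A2 r = tt r • 1 := by
  rw [Ar_eq, A2]
  simp only [sub_mul, mul_sub, smul_mul_assoc, mul_smul_comm, one_mul, mul_one,
    vmv_mul, dot_oo]
  module

lemma hA2A : A2 r * Ar r = tt r • 1 := by
  rw [Ar_eq, A2]
  simp only [sub_mul, mul_sub, smul_mul_assoc, mul_smul_comm, one_mul, mul_one,
    vmv_mul, dot_oo]
  module

lemma hBB2 : Br r * B2 r = tt r • 1 := by
  rw [Br_eq, B2]
  simp only [sub_mul, mul_sub, add_mul, mul_add, smul_mul_assoc, mul_smul_comm, one_mul, mul_one,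
    vmv_mul, dot_d0d0, smul_smul]
  module

lemma hB2B : B2 r * Br r = tt r • 1 := by
  rw [Br_eq, B2]
  simp only [sub_mul, mul_sub, add_mul, mul_add, smul_mul_assoc, mul_smul_comm, one_mul, mul_one,
    vmv_mul, dot_d0d0, smul_smul]
  module

lemma hPQ2 (hr : 3 ≤ r) : Pm r * Q2 r = tt r • 1 := by
  rw [Pm, Q2]
  simp only [sub_mul, mul_sub, add_mul, mul_add, smul_mul_assoc, mul_smul_comm, one_mul, mul_one,
    vmv_mul, dot_oo, dot_od0, dot_d0o, dot_od1, dot_d1o, dot_d0d0, dot_d1d1,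
    dot_d0d1 r hr, dot_d1d0 r hr, smul_smul]
  module

lemma hQ2P (hr : 3 ≤ r) : Q2 r * Pm r = tt r • 1 := by
  rw [Pm, Q2]
  simp only [sub_mul, mul_sub, add_mul, mul_add, smul_mul_assoc, mul_smul_comm, one_mul, mul_one,
    vmv_mul, dot_oo, dot_od0, dot_d0o, dot_od1, dot_d1o, dot_d0d0, dot_d1d1,
    dot_d0d1 r hr, dot_d1d0 r hr, smul_smul]
  module

lemma keyId (hr : 3 ≤ r) : tt r • (Ar r * Br r * Pm r) = Br r * Ar r * Pm r * L2 r := by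
  rw [Ar_eq, Br_eq, L2_eq r hr, Pm]
  simp only [sub_mul, mul_sub, add_mul, mul_add, smul_mul_assoc, mul_smul_comm, one_mul, mul_one,
    vmv_mul, dot_oo, dot_od0, dot_d0o, dot_od1, dot_d1o, dot_d0d0, dot_d1d1,
    dot_d0d1 r hr, dot_d1d0 r hr, smul_smul, smul_sub, smul_add]
  module

lemma L2_smul (ht : tt r ≠ 0) : L2 r = tt r • Matrix.diagonal (lamF r) := by
  have hfun : lam2F r = tt r • lamF r := by
    funext j
    simp only [Pi.smul_apply, lam2F, lamF, smul_eq_mul]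
    split_ifs with h1 h2
    · rw [mul_neg, mul_inv_cancel₀ ht]
    · ring
    · ring
  rw [L2, hfun, diagonal_smul]

/-! ### Tensor powers -/

variable (D : ℕ)

def tp (g : Matrix (Fin r) (Fin r) ℂ) : Matrix (Fin D → Fin r) (Fin D → Fin r) ℂ :=
  Matrix.of fun u v => ∏ k, g (u k) (v k)

lemma tp_mul (g h : Matrix (Fin r) (Fin r) ℂ) :
    tp r D g * tp r D h = tp r D (g * h) := by
  ext u v
  simp only [tp, mul_apply, of_apply]
  rw [Fintype.prod_sum fun k x => g (u k) x * h x (v k)]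
  exact Finset.sum_congr rfl fun w _ => (Finset.prod_mul_distrib).symm

lemma tp_one : tp r D 1 = 1 := by
  ext u v
  simp only [tp, of_apply, one_apply]
  rw [Finset.prod_boole]
  simp [funext_iff]

lemma tp_diagonal (f : Fin r → ℂ) :
    tp r D (Matrix.diagonal f) = Matrix.diagonal fun y => ∏ k, f (y k) := by
  ext u v
  by_cases h : u = v
  · subst h; simp [tp, diagonal_apply_eq]
  · obtain ⟨k, hk⟩ := Function.ne_iff.mp h
    rw [tp, of_apply, diagonal_apply_ne _ h, Finset.prod_eq_zero (Finset.mem_univ k)]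
    rw [diagonal_apply_ne _ hk]

lemma hammingAD_eq : hammingAD D r = tp r D (Ar r) := by
  ext u v
  simp only [hammingAD, of_apply, tp, Ar]
  rw [Finset.prod_boole]
  simp

lemma hammingADstar_eq : hammingADstar D r = tp r D (Br r) := by
  rw [Br, tp_diagonal]
  unfold hammingADstar
  have hfun : ∀ y : Fin D → Fin r, (-1:ℂ) ^ hammingWt y * ((r:ℂ) - 1) ^ (D - hammingWt y)
      = ∏ k, if y k = 0 then tt r else -1 := by
    intro y
    rw [← Finset.prod_filter_mul_prod_filter_not Finset.univ (fun k => y k = 0)]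
    have h1 : ∀ k ∈ Finset.univ.filter (fun k => y k = 0),
        (if y k = 0 then tt r else -1) = tt r := by
      intro k hk; simp only [Finset.mem_filter] at hk; rw [if_pos hk.2]
    have h2 : ∀ k ∈ Finset.univ.filter (fun k => ¬ y k = 0),
        (if y k = 0 then tt r else -1) = -1 := by
      intro k hk; simp only [Finset.mem_filter] at hk; rw [if_neg hk.2]
    rw [Finset.prod_congr rfl h1, Finset.prod_congr rfl h2, Finset.prod_const, Finset.prod_const]
    have hcard : (Finset.univ.filter (fun k => y k = 0)).card = D - hammingWt y := by
      have := Finset.card_filter_add_card_filter_not (s := Finset.univ)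
        (p := fun k : Fin D => y k = 0)
      simp only [Finset.card_univ, Fintype.card_fin] at this
      have hwt : hammingWt y = (Finset.univ.filter (fun k => ¬ y k = 0)).card := rfl
      omega
    rw [hcard]
    have hwt : hammingWt y = (Finset.univ.filter (fun k => ¬ y k = 0)).card := rfl
    rw [← hwt, tt, mul_comm]
  simp only [hfun]

end HAux

lemma prod_zpow_sum {ι : Type*} (s : Finset ι) (a : ℂ) (ha : a ≠ 0) (f : ι → ℤ) :
    ∏ i ∈ s, a ^ f i = a ^ (∑ i ∈ s, f i) := by
  induction s using Finset.cons_induction with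
  | empty => simp
  | cons i s hi ih => rw [Finset.prod_cons, Finset.sum_cons, ih, ← zpow_add₀ ha]

theorem stmt15 (D r : ℕ) (hD : 1 ≤ D) (hr : 3 ≤ r) :
    ((((Finset.Icc (-(D : ℤ)) (D : ℤ)).sort (· ≤ ·)).map
        (fun s => @hammingC D r ⟨by omega⟩
          - ((1 - (r : ℂ)) ^ s) • (1 : Matrix (Fin D → Fin r) (Fin D → Fin r) ℂ))).prod
      = 0) ∧
    -- the `2D+1` scalars `(1−r)^s` (`−D ≤ s ≤ D`) are pairwise distinct:
    Set.InjOn (fun s : ℤ => (1 - (r : ℂ)) ^ s) (Set.Icc (-(D : ℤ)) (D : ℤ)) ∧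
    -- `C` is diagonalizable:
    (∃ (P : Matrix (Fin D → Fin r) (Fin D → Fin r) ℂ) (d : (Fin D → Fin r) → ℂ),
      IsUnit P ∧ @hammingC D r ⟨by omega⟩ = P * Matrix.diagonal d * P⁻¹) ∧
    -- every eigenvalue of `C` is of the form `(1−r)^s` with `−D ≤ s ≤ D`:
    (∀ μ : ℂ, (∃ v : (Fin D → Fin r) → ℂ, v ≠ 0 ∧
        (@hammingC D r ⟨by omega⟩).mulVec v = μ • v) →
      ∃ s : ℤ, -(D : ℤ) ≤ s ∧ s ≤ (D : ℤ) ∧ μ = (1 - (r : ℂ)) ^ s) := by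
  haveI : NeZero r := ⟨by omega⟩
  have ht : tt r ≠ 0 := by
    simp only [tt, sub_ne_zero, ne_eq, Nat.cast_eq_one]
    omega
  have hmt : (1 : ℂ) - (r : ℂ) = -(tt r) := by rw [tt]; ring
  have hmtne : (1 : ℂ) - (r : ℂ) ≠ 0 := by rw [hmt]; exact neg_ne_zero.mpr ht
  -- r-level inverse facts (scaled)
  set A' : Matrix (Fin r) (Fin r) ℂ := (tt r)⁻¹ • A2 r with hA'def
  set B' : Matrix (Fin r) (Fin r) ℂ := (tt r)⁻¹ • B2 r with hB'def
  set Q' : Matrix (Fin r) (Fin r) ℂ := (tt r)⁻¹ • Q2 r with hQ'def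
  have hsmul1 : ∀ X Y : Matrix (Fin r) (Fin r) ℂ, X * Y = tt r • 1 →
      (((tt r)⁻¹ • X) * Y = 1 ∧ X * ((tt r)⁻¹ • Y) = 1) := by
    intro X Y hXY
    constructor
    · rw [Matrix.smul_mul, hXY, smul_smul, inv_mul_cancel₀ ht, one_smul]
    · rw [Matrix.mul_smul, hXY, smul_smul, inv_mul_cancel₀ ht, one_smul]
  have hA'A : A' * Ar r = 1 := (hsmul1 _ _ (hA2A r)).1
  have hAA' : Ar r * A' = 1 := (hsmul1 _ _ (hAA2 r)).2
  have hB'B : B' * Br r = 1 := (hsmul1 _ _ (hB2B r)).1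
  have hBB' : Br r * B' = 1 := (hsmul1 _ _ (hBB2 r)).2
  have hPQ' : Pm r * Q' = 1 := (hsmul1 _ _ (hPQ2 r hr)).2
  have hQ'P : Q' * Pm r = 1 := (hsmul1 _ _ (hQ2P r hr)).1
  -- the r-level eigen-equation
  have key' := keyId r hr
  simp only [Matrix.mul_assoc] at key'
  have h1 : Ar r * (Br r * Pm r) = (tt r)⁻¹ • (Br r * (Ar r * (Pm r * L2 r))) := by
    rw [← key', smul_smul, inv_mul_cancel₀ ht, one_smul]
  have hC1P : (A' * B' * Ar r * Br r) * Pm r = Pm r * Matrix.diagonal (lamF r) := by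
    have hassoc : (A' * B' * Ar r * Br r) * Pm r = A' * (B' * (Ar r * (Br r * Pm r))) := by
      simp only [Matrix.mul_assoc]
    rw [hassoc, h1, Matrix.mul_smul, Matrix.mul_smul]
    rw [← Matrix.mul_assoc B' (Br r), hB'B, Matrix.one_mul]
    rw [← Matrix.mul_assoc A' (Ar r), hA'A, Matrix.one_mul]
    rw [L2_smul r ht, Matrix.mul_smul, smul_smul, inv_mul_cancel₀ ht, one_smul]
  -- D-level objects
  set P : Matrix (Fin D → Fin r) (Fin D → Fin r) ℂ := tp r D (Pm r) with hPdef
  set Q : Matrix (Fin D → Fin r) (Fin D → Fin r) ℂ := tp r D Q' with hQdef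
  set dfun : (Fin D → Fin r) → ℂ := fun y => ∏ k, lamF r (y k) with hdfundef
  have hPQ : P * Q = 1 := by rw [hPdef, hQdef, tp_mul, hPQ', tp_one]
  have hQP : Q * P = 1 := by rw [hPdef, hQdef, tp_mul, hQ'P, tp_one]
  have hADinv : (hammingAD D r)⁻¹ = tp r D A' :=
    Matrix.inv_eq_right_inv (by rw [hammingAD_eq, tp_mul, hAA', tp_one])
  have hADsinv : (hammingADstar D r)⁻¹ = tp r D B' :=
    Matrix.inv_eq_right_inv (by rw [hammingADstar_eq, tp_mul, hBB', tp_one])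
  have hCtp : hammingC D r = tp r D (A' * B' * Ar r * Br r) := by
    rw [hammingC, hADinv, hADsinv, hammingAD_eq, hammingADstar_eq, tp_mul, tp_mul, tp_mul]
  have hCP : hammingC D r * P = P * Matrix.diagonal dfun := by
    rw [hCtp, hPdef, tp_mul, hC1P, ← tp_mul, tp_diagonal]
  have hCeq : hammingC D r = P * Matrix.diagonal dfun * Q := by
    calc hammingC D r = hammingC D r * (P * Q) := by rw [hPQ, Matrix.mul_one]
      _ = (hammingC D r * P) * Q := by rw [Matrix.mul_assoc]
      _ = P * Matrix.diagonal dfun * Q := by rw [hCP]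
  have hPunit : IsUnit P := ⟨⟨P, Q, hPQ, hQP⟩, rfl⟩
  have hPinv : P⁻¹ = Q := Matrix.inv_eq_right_inv hPQ
  -- eigenvalues of the diagonal part
  have hlam : ∀ j : Fin r, lamF r j = (1 - (r:ℂ)) ^ (eF r j) := by
    intro j
    rw [hmt, lamF, eF]
    split_ifs with h1 h2
    · rw [_root_.zpow_neg, zpow_one, inv_neg]
    · rw [zpow_one]
    · rw [zpow_zero]
  set sig : (Fin D → Fin r) → ℤ := fun y => ∑ k, eF r (y k) with hsigdef
  have hsig_mem : ∀ y, sig y ∈ Finset.Icc (-(D : ℤ)) (D : ℤ) := by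
    intro y
    rw [Finset.mem_Icc]
    have hb : ∀ j, -1 ≤ eF r j ∧ eF r j ≤ 1 := by
      intro j; rw [eF]; split_ifs <;> omega
    constructor
    · calc -(D:ℤ) = ∑ _k : Fin D, (-1 : ℤ) := by simp
        _ ≤ sig y := Finset.sum_le_sum fun k _ => (hb (y k)).1
    · calc sig y ≤ ∑ _k : Fin D, (1 : ℤ) := Finset.sum_le_sum fun k _ => (hb (y k)).2
        _ = (D:ℤ) := by simp
  have hdf : ∀ y, dfun y = (1 - (r:ℂ)) ^ (sig y) := by
    intro y
    rw [hdfundef]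
    simp only [hsigdef]
    rw [← prod_zpow_sum Finset.univ _ hmtne]
    exact Finset.prod_congr rfl fun k _ => hlam (y k)
  -- Part 1
  set l : List ℤ := (Finset.Icc (-(D : ℤ)) (D : ℤ)).sort (· ≤ ·) with hldef
  have hmulPQ : ∀ X Y : Matrix (Fin D → Fin r) (Fin D → Fin r) ℂ,
      (P * X * Q) * (P * Y * Q) = P * (X * Y) * Q := by
    intro X Y
    simp only [Matrix.mul_assoc]
    rw [← Matrix.mul_assoc Q P (Y * Q), hQP, Matrix.one_mul]
  have hfac : ∀ s : ℤ, hammingC D r - (1 - (r:ℂ)) ^ s • 1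
      = P * Matrix.diagonal (fun y => dfun y - (1 - (r:ℂ)) ^ s) * Q := by
    intro s
    have hdd : Matrix.diagonal (fun y => dfun y - (1 - (r:ℂ)) ^ s)
        = Matrix.diagonal dfun - (1 - (r:ℂ)) ^ s • (1 : Matrix (Fin D → Fin r) (Fin D → Fin r) ℂ) := by
      rw [Matrix.smul_one_eq_diagonal, ← Matrix.diagonal_sub]
    rw [hdd, Matrix.mul_sub, Matrix.sub_mul, hCeq]
    congr 1
    rw [Matrix.mul_smul, Matrix.smul_mul, Matrix.mul_one, hPQ]
  have hconj : ∀ L : List ℤ,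
      ((L.map fun s => hammingC D r - (1 - (r:ℂ)) ^ s • 1).prod)
        = P * ((L.map fun s => Matrix.diagonal fun y => dfun y - (1 - (r:ℂ)) ^ s).prod) * Q := by
    intro L
    induction L with
    | nil => simp only [List.map_nil, List.prod_nil, Matrix.mul_one, hPQ]
    | cons s L ih =>
      rw [List.map_cons, List.prod_cons, ih, List.map_cons, List.prod_cons, hfac s, hmulPQ]
  have hdiagprod : ∀ L : List ℤ,
      ((L.map fun s => Matrix.diagonal fun y => dfun y - (1 - (r:ℂ)) ^ s).prod)
        = Matrix.diagonal fun y => (L.map fun s => dfun y - (1 - (r:ℂ)) ^ s).prod := by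
    intro L
    induction L with
    | nil => simp only [List.map_nil, List.prod_nil, Matrix.diagonal_one]
    | cons s L ih =>
      rw [List.map_cons, List.prod_cons, ih, Matrix.diagonal_mul_diagonal]
      simp only [List.map_cons, List.prod_cons]
  have hzero : ∀ y, ((l.map fun s => dfun y - (1 - (r:ℂ)) ^ s).prod) = 0 := by
    intro y
    apply List.prod_eq_zero
    refine List.mem_map.mpr ⟨sig y, ?_, ?_⟩
    · rw [hldef, Finset.mem_sort]; exact hsig_mem y
    · rw [hdf y, sub_self]
  have part1 : ((l.map fun s => hammingC D r - (1 - (r:ℂ)) ^ s • 1).prod) = 0 := by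
    rw [hconj, hdiagprod]
    have : (Matrix.diagonal fun y => (l.map fun s => dfun y - (1 - (r:ℂ)) ^ s).prod)
        = (0 : Matrix (Fin D → Fin r) (Fin D → Fin r) ℂ) := by
      rw [show (fun y => (l.map fun s => dfun y - (1 - (r:ℂ)) ^ s).prod)
          = fun _ => (0:ℂ) from funext hzero, Matrix.diagonal_zero]
    rw [this, Matrix.mul_zero, Matrix.zero_mul]
  -- Part 2
  have part2 : Set.InjOn (fun s : ℤ => (1 - (r : ℂ)) ^ s) (Set.Icc (-(D : ℤ)) (D : ℤ)) := by
    have habs : ‖(1 - (r:ℂ))‖ = (r:ℝ) - 1 := by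
      have h3 : (3:ℝ) ≤ (r:ℝ) := by exact_mod_cast hr
      rw [show (1 - (r:ℂ)) = (((1 - (r:ℝ)) : ℝ) : ℂ) by push_cast; ring, Complex.norm_real, Real.norm_eq_abs,
        abs_of_nonpos (by linarith)]
      ring
    intro a _ b _ hab
    have h3 : (3:ℝ) ≤ (r:ℝ) := by exact_mod_cast hr
    have hinj : Function.Injective fun s : ℤ => ((r:ℝ) - 1) ^ s :=
      zpow_right_injective₀ (by linarith) (by intro h; linarith [h])
    apply hinj
    simp only
    rw [← habs, ← norm_zpow, ← norm_zpow]
    exact congrArg norm hab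
  refine ⟨part1, part2, ⟨P, dfun, hPunit, by rw [hCeq, hPinv]⟩, ?_⟩
  -- Part 4
  rintro μ ⟨v, hv, hCv⟩
  have hmv : ∀ L : List ℤ,
      ((L.map fun s => hammingC D r - (1 - (r:ℂ)) ^ s • 1).prod).mulVec v
        = ((L.map fun s => μ - (1 - (r:ℂ)) ^ s).prod) • v := by
    intro L
    induction L with
    | nil => simp only [List.map_nil, List.prod_nil, Matrix.one_mulVec, one_smul]
    | cons s L ih =>
      rw [List.map_cons, List.prod_cons, List.map_cons, List.prod_cons,
        ← Matrix.mulVec_mulVec, ih, Matrix.mulVec_smul, Matrix.sub_mulVec, hCv,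
        Matrix.smul_mulVec, Matrix.one_mulVec, ← sub_smul, smul_smul, mul_comm]
  have h0 : ((l.map fun s => μ - (1 - (r:ℂ)) ^ s).prod) • v = 0 := by
    rw [← hmv, part1, Matrix.zero_mulVec]
  have hps : ((l.map fun s => μ - (1 - (r:ℂ)) ^ s).prod) = 0 :=
    (smul_eq_zero.mp h0).resolve_right hv
  have hmem : (0:ℂ) ∈ (l.map fun s => μ - (1 - (r:ℂ)) ^ s) := List.prod_eq_zero_iff.mp hps
  obtain ⟨s, hsmem, hseq⟩ := List.mem_map.mp hmem
  rw [hldef, Finset.mem_sort] at hsmem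
  obtain ⟨hs1, hs2⟩ := Finset.mem_Icc.mp hsmem
  exact ⟨s, hs1, hs2, sub_eq_zero.mp hseq⟩
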